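/- arXiv:1206.5401 — 3 statements merged into one kernel-verified Lean document; each statement's English description precedes it below -/
import Mathlib

section
/- Fix n and σ > 0, and let Z ~ N(0, σ²Iₙ). Define SPB(v) = Pr{‖Z‖² ≥ (v/V_n)^{2/n}} for v > 0, where V_n is the unit-ball volume. Then SPB is a convex, continuous, monotone decreasing function of v on (0,∞). -/
open MeasureTheory Real

set_option maxHeartbeats 1000000 in
/-- The sphere-packing function `SPB(v) = Pr{‖Z‖² ≥ (v/V_n)^{2/n}}`, for
`Z ~ N(0,σ²Iₙ)`, is convex, continuous and monotone decreasing on `(0,∞)`. -/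
theorem stmt11 (n : ℕ) (hn : 1 ≤ n) (σ : ℝ) (hσ : 0 < σ)
    (Vn : ℝ) (hVn : Vn = π ^ ((n : ℝ) / 2) / (((n : ℝ) / 2) * Real.Gamma ((n : ℝ) / 2)))
    (γ : Measure (EuclideanSpace ℝ (Fin n)))
    (hγ : γ = volume.withDensity (fun z => ENNReal.ofReal
      ((2 * π * σ ^ 2) ^ (-(n : ℝ) / 2) * Real.exp (-‖z‖ ^ 2 / (2 * σ ^ 2)))))
    (SPB : ℝ → ℝ)
    (hSPB : ∀ v, SPB v = (γ {z | (v / Vn) ^ (2 / (n : ℝ)) ≤ ‖z‖ ^ 2}).toReal) :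
    ConvexOn ℝ (Set.Ioi 0) SPB ∧ ContinuousOn SPB (Set.Ioi 0)
      ∧ AntitoneOn SPB (Set.Ioi 0) := by
  classical
  have hnpos : (0:ℝ) < (n:ℝ) := by exact_mod_cast Nat.lt_of_lt_of_le Nat.zero_lt_one hn
  have hn0 : (n:ℝ) ≠ 0 := ne_of_gt hnpos
  have hσ2 : (0:ℝ) < 2 * σ ^ 2 := by positivity
  have hπ : (0:ℝ) < π := Real.pi_pos
  have hVnpos : 0 < Vn := by
    rw [hVn]
    have h1 : 0 < Real.Gamma ((n:ℝ)/2) := Real.Gamma_pos_of_pos (by positivity)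
    positivity
  set c : ℝ := (2 * π * σ ^ 2) ^ (-(n:ℝ)/2) with hc_def
  have hcpos : 0 < c := Real.rpow_pos_of_pos (by positivity) _
  set s : ℝ → ℝ := fun u => (u / Vn) ^ (1/(n:ℝ)) with hs_def
  have hs_nonneg : ∀ u, 0 < u → 0 ≤ s u := by
    intro u hu
    exact Real.rpow_nonneg (by positivity) _
  have hs_mono : ∀ w v : ℝ, 0 < w → w ≤ v → s w ≤ s v := by
    intro w v hw hwv
    exact Real.rpow_le_rpow (by positivity) (by gcongr) (by positivity)
  have hsq : ∀ u : ℝ, 0 < u → (u / Vn) ^ (2/(n:ℝ)) = s u ^ 2 := by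
    intro u hu
    have hb : (0:ℝ) ≤ u / Vn := by positivity
    rw [hs_def]
    simp only
    rw [← Real.rpow_natCast ((u/Vn) ^ (1/(n:ℝ))) 2, ← Real.rpow_mul hb]
    congr 1
    push_cast
    ring
  have hsn : ∀ u : ℝ, 0 < u → s u ^ n = u / Vn := by
    intro u hu
    have hb : (0:ℝ) ≤ u / Vn := by positivity
    rw [hs_def]
    simp only
    rw [← Real.rpow_natCast ((u/Vn) ^ (1/(n:ℝ))) n, ← Real.rpow_mul hb, one_div,
      inv_mul_cancel₀ hn0, Real.rpow_one]
  have hS : ∀ u : ℝ, 0 < u →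
      {z : EuclideanSpace ℝ (Fin n) | (u / Vn) ^ (2/(n:ℝ)) ≤ ‖z‖ ^ 2}
        = {z | s u ≤ ‖z‖} := by
    intro u hu
    ext z
    simp only [Set.mem_setOf_eq, hsq u hu]
    exact pow_le_pow_iff_left₀ (hs_nonneg u hu) (norm_nonneg z) two_ne_zero
  have hball : ∀ u : ℝ, 0 < u →
      volume (Metric.ball (0 : EuclideanSpace ℝ (Fin n)) (s u)) = ENNReal.ofReal u := by
    intro u hu
    have : Nonempty (Fin n) := ⟨⟨0, hn⟩⟩
    rw [EuclideanSpace.volume_ball, Fintype.card_fin]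
    rw [← ENNReal.ofReal_pow (hs_nonneg u hu), ← ENNReal.ofReal_mul (by positivity)]
    congr 1
    have hG : Real.sqrt π ^ n / Real.Gamma ((n:ℝ)/2 + 1) = Vn := by
      rw [hVn, Real.Gamma_add_one (by positivity), Real.sqrt_eq_rpow,
        ← Real.rpow_natCast (π ^ ((1:ℝ)/2)) n, ← Real.rpow_mul (le_of_lt hπ)]
      congr 2
      ring
    rw [hG, hsn u hu, div_mul_cancel₀ _ (ne_of_gt hVnpos)]
  -- the density
  set f : EuclideanSpace ℝ (Fin n) → ℝ := fun z => c * Real.exp (-‖z‖ ^ 2 / (2 * σ ^ 2))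
    with hf_def
  have hf_cont : Continuous f := by
    apply continuous_const.mul
    exact Real.continuous_exp.comp (((continuous_norm.pow 2).neg).div_const _)
  have hdm : Measurable fun z : EuclideanSpace ℝ (Fin n) => ENNReal.ofReal (f z) :=
    (hf_cont.measurable).ennreal_ofReal
  have hγA : ∀ A : Set (EuclideanSpace ℝ (Fin n)), MeasurableSet A →
      γ A = ∫⁻ z in A, ENNReal.ofReal (f z) ∂volume := by
    intro A hA
    rw [hγ, withDensity_apply _ hA]
  -- integrability of the density, hence finiteness of γ
  have hint : Integrable f := by
    apply Integrable.const_mul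
    have hb : (0:ℝ) < (2*σ^2)⁻¹ := by positivity
    have h := (GaussianFourier.integrable_cexp_neg_mul_sq_norm_add
      (V := EuclideanSpace ℝ (Fin n)) (b := (((2*σ^2)⁻¹ : ℝ) : ℂ))
      (by rwa [Complex.ofReal_re]) 0 0).norm
    apply h.congr
    filter_upwards with z
    simp only [zero_mul, add_zero, Complex.norm_exp]
    have : (-(((2*σ^2)⁻¹ : ℝ) : ℂ) * (‖z‖:ℂ) ^ 2) = (((-‖z‖^2 / (2*σ^2)) : ℝ) : ℂ) := by
      push_cast
      ring
    rw [this, Complex.ofReal_re]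
  have hfin : ∀ A : Set (EuclideanSpace ℝ (Fin n)), γ A ≠ ⊤ := by
    intro A
    have huniv : γ Set.univ ≠ ⊤ := by
      rw [hγA _ MeasurableSet.univ, Measure.restrict_univ]
      exact (lintegral_ofReal_ne_top_iff_integrable hint.1
        (Filter.Eventually.of_forall fun z => by positivity)).mpr hint
    exact ne_top_of_le_ne_top huniv (measure_mono (Set.subset_univ A))
  -- the "derivative bound" function
  set g : ℝ → ℝ := fun u => c * Real.exp (-((u / Vn) ^ (2/(n:ℝ))) / (2 * σ ^ 2)) with hg_def
  have hg_nonneg : ∀ u, 0 ≤ g u := by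
    intro u
    have : (0:ℝ) < Real.exp (-((u / Vn) ^ (2/(n:ℝ))) / (2 * σ ^ 2)) := Real.exp_pos _
    positivity
  -- key two-sided slope bound
  have key : ∀ w v : ℝ, 0 < w → w < v →
      g v * (v - w) ≤ SPB w - SPB v ∧ SPB w - SPB v ≤ g w * (v - w) := by
    intro w v hw hwv
    have hv : 0 < v := hw.trans hwv
    have hsw_sv : s w ≤ s v := hs_mono w v hw (le_of_lt hwv)
    set A : Set (EuclideanSpace ℝ (Fin n)) :=
      Metric.ball 0 (s v) \ Metric.ball 0 (s w) with hA_def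
    have hAmeas : MeasurableSet A := measurableSet_ball.diff measurableSet_ball
    have hAvol : volume A = ENNReal.ofReal (v - w) := by
      rw [hA_def, measure_diff (Metric.ball_subset_ball hsw_sv)
        measurableSet_ball.nullMeasurableSet (by rw [hball w hw]; exact ENNReal.ofReal_ne_top),
        hball v hv, hball w hw, ← ENNReal.ofReal_sub _ (le_of_lt hw)]
    have hAmem : ∀ z : EuclideanSpace ℝ (Fin n), z ∈ A ↔ s w ≤ ‖z‖ ∧ ‖z‖ < s v := by
      intro z
      rw [hA_def]
      simp only [Set.mem_diff, Metric.mem_ball, dist_zero_right]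
      push_neg
      tauto
    have hdiff : {z : EuclideanSpace ℝ (Fin n) | s w ≤ ‖z‖}
        = {z | s v ≤ ‖z‖} ∪ A := by
      ext z
      simp only [Set.mem_union, Set.mem_setOf_eq, hAmem z]
      constructor
      · intro h
        rcases lt_or_ge ‖z‖ (s v) with h' | h'
        · exact Or.inr ⟨h, h'⟩
        · exact Or.inl h'
      · rintro (h | ⟨h, _⟩)
        · linarith
        · exact h
    have hdisj : Disjoint {z : EuclideanSpace ℝ (Fin n) | s v ≤ ‖z‖} A := by
      rw [Set.disjoint_left]
      intro z hz hzA
      rw [hAmem z] at hzA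
      simp only [Set.mem_setOf_eq] at hz
      linarith [hzA.2]
    have hsum : γ {z : EuclideanSpace ℝ (Fin n) | s w ≤ ‖z‖}
        = γ {z | s v ≤ ‖z‖} + γ A := by
      rw [hdiff, measure_union hdisj hAmeas]
    have hSPBdiff : SPB w - SPB v = (γ A).toReal := by
      rw [hSPB w, hSPB v, hS w hw, hS v hv, hsum,
        ENNReal.toReal_add (hfin _) (hfin _)]
      ring
    -- bounds on γ A
    have hub : γ A ≤ ENNReal.ofReal (g w) * ENNReal.ofReal (v - w) := by
      rw [hγA A hAmeas, ← hAvol]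
      calc ∫⁻ z in A, ENNReal.ofReal (f z) ∂volume
          ≤ ∫⁻ _ in A, ENNReal.ofReal (g w) ∂volume := by
            apply setLIntegral_mono measurable_const
            intro z hz
            apply ENNReal.ofReal_le_ofReal
            rw [hf_def, hg_def]
            simp only
            rw [hsq w hw]
            have h1 : s w ≤ ‖z‖ := ((hAmem z).mp hz).1
            have h2 : s w ^ 2 ≤ ‖z‖ ^ 2 := by
              gcongr

            gcongr
        _ = ENNReal.ofReal (g w) * volume A := setLIntegral_const _ _
    have hlb : ENNReal.ofReal (g v) * ENNReal.ofReal (v - w) ≤ γ A := by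
      rw [hγA A hAmeas, ← hAvol, ← setLIntegral_const A (ENNReal.ofReal (g v))]
      apply setLIntegral_mono hdm
      intro z hz
      apply ENNReal.ofReal_le_ofReal
      rw [hf_def, hg_def]
      simp only
      rw [hsq v hv]
      have h1 : ‖z‖ < s v := ((hAmem z).mp hz).2
      have h2 : ‖z‖ ^ 2 ≤ s v ^ 2 := by
        gcongr
      gcongr
    constructor
    · have := ENNReal.toReal_mono (hfin A) hlb
      rw [← ENNReal.ofReal_mul (hg_nonneg v), ENNReal.toReal_ofReal
        (mul_nonneg (hg_nonneg v) (by linarith))] at this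
      linarith [hSPBdiff ▸ this]
    · have := ENNReal.toReal_mono
        (ENNReal.mul_ne_top ENNReal.ofReal_ne_top ENNReal.ofReal_ne_top) hub
      rw [← ENNReal.ofReal_mul (hg_nonneg w), ENNReal.toReal_ofReal
        (mul_nonneg (hg_nonneg w) (by linarith))] at this
      linarith [hSPBdiff ▸ this]
  -- conclusions
  have hconv : ConvexOn ℝ (Set.Ioi 0) SPB := by
    apply convexOn_of_slope_mono_adjacent (convex_Ioi 0)
    intro x y z hx hz hxy hyz
    have hx0 : (0:ℝ) < x := hx
    have hy0 : (0:ℝ) < y := hx0.trans hxy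
    obtain ⟨h1, _⟩ := key x y hx0 hxy
    obtain ⟨_, h4⟩ := key y z hy0 hyz
    have hxy' : (0:ℝ) < y - x := by linarith
    have hyz' : (0:ℝ) < z - y := by linarith
    rw [div_le_div_iff₀ hxy' hyz']
    nlinarith [mul_le_mul_of_nonneg_right h1 (le_of_lt hyz'),
      mul_le_mul_of_nonneg_right h4 (le_of_lt hxy')]
  have hanti : AntitoneOn SPB (Set.Ioi 0) := by
    intro x hx y hy hxy
    rcases eq_or_lt_of_le hxy with rfl | h
    · exact le_refl _
    · have hb := (key x y hx h).1
      nlinarith [mul_nonneg (hg_nonneg y) (by linarith : (0:ℝ) ≤ y - x)]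
  exact ⟨hconv, hconv.continuousOn isOpen_Ioi, hanti⟩
end

section
/- For small t > 0, the function η₁(t) = −∫_{−∞}^{∞} (Q(y − t/2) − Q(y + t/2))·ln(Q(y − t/2) − Q(y + t/2)) dy satisfies η₁(t) = −t·C(t) + o(t·|C(t)|) where C(t) = (1/2)ln(t²/(2πe)); in particular η₁(t) → 0 as t → 0⁺. -/
open MeasureTheory Real Filter Asymptotics Topology

/-- The standard Gaussian tail function `Q`. -/
noncomputable def gaussQ (t : ℝ) : ℝ :=
  ∫ u in Set.Ioi t, (1 / Real.sqrt (2 * π)) * Real.exp (-u ^ 2 / 2)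

/-- The first error moment function `η₁`. -/
noncomputable def eta1 (t : ℝ) : ℝ :=
  -∫ y : ℝ, (gaussQ (y - t / 2) - gaussQ (y + t / 2))
      * Real.log (gaussQ (y - t / 2) - gaussQ (y + t / 2))

noncomputable def gphi (u : ℝ) : ℝ := (1 / Real.sqrt (2 * π)) * Real.exp (-u ^ 2 / 2)

lemma gphi_pos (u : ℝ) : 0 < gphi u := by
  have h : 0 < Real.sqrt (2 * π) := Real.sqrt_pos.2 (by positivity)
  exact mul_pos (by positivity) (Real.exp_pos _)

lemma continuous_gphi : Continuous gphi := by
  unfold gphi; fun_prop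

lemma gphi_eq (u : ℝ) : gphi u = (1 / Real.sqrt (2 * π)) * Real.exp (-(1/2) * u ^ 2) := by
  unfold gphi; ring_nf

lemma integrable_gphi : Integrable gphi := by
  have := (integrable_exp_neg_mul_sq (by norm_num : (0:ℝ) < 1/2)).const_mul (1 / Real.sqrt (2 * π))
  refine this.congr ?_
  filter_upwards with u
  rw [gphi_eq]

lemma integral_gphi : ∫ u : ℝ, gphi u = 1 := by
  have h : ∫ u : ℝ, Real.exp (-(1/2) * u ^ 2) = Real.sqrt (2 * π) := by
    rw [integral_gaussian]
    rw [div_div_eq_mul_div, div_one, mul_comm]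
  have hs : Real.sqrt (2 * π) ≠ 0 := ne_of_gt (Real.sqrt_pos.2 (by positivity))
  simp only [gphi_eq, integral_const_mul, h]
  field_simp

lemma integrable_exp_lin_quad (b : ℝ) : Integrable (fun y : ℝ => Real.exp (b * y - y ^ 2 / 2)) := by
  have h : (fun y : ℝ => Real.exp (b * y - y ^ 2 / 2))
      = fun y => Real.exp (b ^ 2 / 2) * Real.exp (-(1/2) * (y - b) ^ 2) := by
    funext y
    rw [← Real.exp_add]
    ring_nf
  rw [h]
  exact ((integrable_exp_neg_mul_sq (by norm_num : (0:ℝ) < 1/2)).comp_sub_right b).const_mul _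

lemma integrable_exp_abs_quad (a : ℝ) : Integrable (fun y : ℝ => Real.exp (a * |y| - y ^ 2 / 2)) := by
  refine Integrable.mono' ((integrable_exp_lin_quad a).add (integrable_exp_lin_quad (-a))) ?_ ?_
  · apply Continuous.aestronglyMeasurable
    fun_prop
  · filter_upwards with y
    rw [Real.norm_eq_abs, abs_of_nonneg (Real.exp_pos _).le]
    rcases abs_cases y with ⟨h1, _⟩ | ⟨h1, _⟩
    · rw [h1]
      have : Real.exp (a * y - y ^ 2 / 2) ≤ Real.exp (a * y - y ^ 2 / 2) + Real.exp (-a * y - y ^ 2 / 2) :=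
        le_add_of_nonneg_right (Real.exp_pos _).le
      simpa using this
    · rw [h1]
      have : Real.exp (-a * y - y ^ 2 / 2) ≤ Real.exp (a * y - y ^ 2 / 2) + Real.exp (-a * y - y ^ 2 / 2) :=
        le_add_of_nonneg_left (Real.exp_pos _).le
      calc Real.exp (a * -y - y ^ 2 / 2) = Real.exp (-a * y - y ^ 2 / 2) := by ring_nf
      _ ≤ _ := this

lemma pow_le_factorial_mul_exp (n : ℕ) {x : ℝ} (hx : 0 ≤ x) : x ^ n ≤ n.factorial * Real.exp x := by
  have h1 : x ^ n / n.factorial ≤ Real.exp x := by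
    calc x ^ n / n.factorial ≤ ∑ i ∈ Finset.range (n + 1), x ^ i / i.factorial := by
          exact Finset.single_le_sum (f := fun i => x ^ i / (i.factorial : ℝ))
            (fun i _ => by positivity) (Finset.self_mem_range_succ n)
      _ ≤ Real.exp x := Real.sum_le_exp_of_nonneg hx _
  have hf : (0:ℝ) < n.factorial := by exact_mod_cast n.factorial_pos
  calc x ^ n = n.factorial * (x ^ n / n.factorial) := by field_simp
  _ ≤ n.factorial * Real.exp x := by
      exact mul_le_mul_of_nonneg_left h1 hf.le

lemma integrable_pow_abs_exp_quad (n : ℕ) (a : ℝ) :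
    Integrable (fun y : ℝ => |y| ^ n * Real.exp (a * |y| - y ^ 2 / 2)) := by
  refine Integrable.mono' ((integrable_exp_abs_quad (a + 1)).const_mul n.factorial) ?_ ?_
  · apply Continuous.aestronglyMeasurable
    fun_prop
  · filter_upwards with y
    rw [Real.norm_eq_abs, abs_of_nonneg (by positivity)]
    calc |y| ^ n * Real.exp (a * |y| - y ^ 2 / 2)
        ≤ (n.factorial * Real.exp |y|) * Real.exp (a * |y| - y ^ 2 / 2) :=
          mul_le_mul_of_nonneg_right (pow_le_factorial_mul_exp n (abs_nonneg y)) (Real.exp_pos _).le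
      _ = n.factorial * Real.exp ((a + 1) * |y| - y ^ 2 / 2) := by
          rw [mul_assoc, ← Real.exp_add]; ring_nf

lemma integrable_mul_gphi : Integrable (fun u : ℝ => u * gphi u) := by
  refine Integrable.mono' (((integrable_pow_abs_exp_quad 1 0).const_mul (1 / Real.sqrt (2 * π)))) ?_ ?_
  · exact (continuous_id.mul continuous_gphi).aestronglyMeasurable
  · filter_upwards with y
    rw [Real.norm_eq_abs, abs_mul]
    unfold gphi
    rw [abs_of_nonneg (by positivity : (0:ℝ) ≤ (1 / Real.sqrt (2 * π)) * Real.exp (-y ^ 2 / 2))]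
    have : (0:ℝ) ≤ 1 / Real.sqrt (2 * π) := by positivity
    calc |y| * ((1 / Real.sqrt (2 * π)) * Real.exp (-y ^ 2 / 2))
        = 1 / Real.sqrt (2 * π) * (|y| ^ 1 * Real.exp (0 * |y| - y ^ 2 / 2)) := by ring_nf
      _ ≤ _ := le_refl _

lemma integrable_sq_gphi : Integrable (fun u : ℝ => u ^ 2 * gphi u) := by
  refine Integrable.mono' (((integrable_pow_abs_exp_quad 2 0).const_mul (1 / Real.sqrt (2 * π)))) ?_ ?_
  · exact ((continuous_id.pow 2).mul continuous_gphi).aestronglyMeasurable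
  · filter_upwards with y
    rw [Real.norm_eq_abs, abs_mul]
    unfold gphi
    rw [abs_of_nonneg (by positivity : (0:ℝ) ≤ (1 / Real.sqrt (2 * π)) * Real.exp (-y ^ 2 / 2)),
      abs_of_nonneg (sq_nonneg y)]
    calc y ^ 2 * ((1 / Real.sqrt (2 * π)) * Real.exp (-y ^ 2 / 2))
        = 1 / Real.sqrt (2 * π) * (|y| ^ 2 * Real.exp (0 * |y| - y ^ 2 / 2)) := by
          rw [sq_abs]; ring_nf
      _ ≤ _ := le_refl _

lemma integral_mul_gphi : ∫ u : ℝ, u * gphi u = 0 := by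
  have hodd : ∀ u : ℝ, -u * gphi (-u) = -(u * gphi u) := by
    intro u; unfold gphi; ring_nf
  have h := MeasureTheory.integral_neg_eq_self (fun u : ℝ => u * gphi u) volume
  have h2 : ∫ u : ℝ, -u * gphi (-u) = ∫ u : ℝ, u * gphi u := h
  rw [show (fun u : ℝ => -u * gphi (-u)) = fun u => -(u * gphi u) from funext hodd,
    integral_neg] at h2
  linarith

lemma exp_half_sq_tendsto : Tendsto (fun x : ℝ => -x * Real.exp (-x ^ 2 / 2)) atTop (𝓝 0) := by
  apply squeeze_zero_norm' (a := fun x : ℝ => 2 / x)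
  · filter_upwards [eventually_ge_atTop (1:ℝ)] with x hx
    rw [norm_mul, norm_neg, Real.norm_eq_abs, Real.norm_eq_abs, abs_of_pos (by linarith),
      abs_of_nonneg (Real.exp_pos _).le]
    have hE : x ^ 2 / 2 ≤ Real.exp (x ^ 2 / 2) := by
      have := Real.add_one_le_exp (x ^ 2 / 2); linarith
    have hEpos : (0:ℝ) < Real.exp (x ^ 2 / 2) := Real.exp_pos _
    have h2 : Real.exp (-x ^ 2 / 2) = (Real.exp (x ^ 2 / 2))⁻¹ := by
      rw [← Real.exp_neg]; ring_nf
    have hxpos : (0:ℝ) < x := by linarith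
    have key : x * (rexp (x ^ 2 / 2))⁻¹ ≤ x * (x ^ 2 / 2)⁻¹ := by
      apply mul_le_mul_of_nonneg_left _ hxpos.le
      exact inv_anti₀ (by positivity) hE
    have h5 : x * (x ^ 2 / 2)⁻¹ = 2 / x := by field_simp
    calc x * rexp (-x ^ 2 / 2) = x * (rexp (x ^ 2 / 2))⁻¹ := by rw [h2]
      _ ≤ 2 / x := by rw [← h5] at *; exact key
  · exact tendsto_const_nhds.div_atTop tendsto_id

lemma integrable_sq_exp : Integrable (fun x : ℝ => x ^ 2 * Real.exp (-x ^ 2 / 2)) := by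
  refine (integrable_pow_abs_exp_quad 2 0).congr ?_
  filter_upwards with x
  rw [sq_abs]
  norm_num
  left; ring

lemma integrable_exp_base : Integrable (fun x : ℝ => Real.exp (-x ^ 2 / 2)) := by
  refine (integrable_exp_abs_quad 0).congr ?_
  filter_upwards with x
  norm_num
  ring_nf

lemma integral_sq_exp_Ioi :
    ∫ x in Set.Ioi (0:ℝ), x ^ 2 * Real.exp (-x ^ 2 / 2)
      = ∫ x in Set.Ioi (0:ℝ), Real.exp (-x ^ 2 / 2) := by
  have hderiv : ∀ x ∈ Set.Ioi (0:ℝ),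
      HasDerivAt (fun y : ℝ => -y * Real.exp (-y ^ 2 / 2))
        (x ^ 2 * Real.exp (-x ^ 2 / 2) - Real.exp (-x ^ 2 / 2)) x := by
    intro x _
    have h1 : HasDerivAt (fun y : ℝ => -y ^ 2 / 2) (-x) x := by
      have := ((hasDerivAt_pow 2 x).neg).div_const 2
      exact this.congr_deriv (by push_cast; ring)
    have h2 := h1.exp
    have h3 := ((hasDerivAt_id x).neg).mul h2
    exact h3.congr_deriv (by simp; ring)
  have hint : IntegrableOn
      (fun x : ℝ => x ^ 2 * Real.exp (-x ^ 2 / 2) - Real.exp (-x ^ 2 / 2)) (Set.Ioi 0) :=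
    (integrable_sq_exp.sub integrable_exp_base).integrableOn
  have hcont : ContinuousWithinAt (fun y : ℝ => -y * Real.exp (-y ^ 2 / 2)) (Set.Ici 0) 0 := by
    apply Continuous.continuousWithinAt
    fun_prop
  have key := MeasureTheory.integral_Ioi_of_hasDerivAt_of_tendsto hcont hderiv hint
    exp_half_sq_tendsto
  simp only [neg_zero, zero_mul, sub_zero] at key
  rw [MeasureTheory.integral_sub (integrable_sq_exp.integrableOn)
    (integrable_exp_base.integrableOn)] at key
  linarith [key]

lemma integral_sq_gphi : ∫ u : ℝ, u ^ 2 * gphi u = 1 := by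
  have habs1 : ∫ x : ℝ, x ^ 2 * Real.exp (-x ^ 2 / 2)
      = 2 * ∫ x in Set.Ioi (0:ℝ), x ^ 2 * Real.exp (-x ^ 2 / 2) := by
    rw [← integral_comp_abs (f := fun x : ℝ => x ^ 2 * Real.exp (-x ^ 2 / 2))]
    congr 1
    funext x
    rw [sq_abs]
  have habs2 : ∫ x : ℝ, Real.exp (-x ^ 2 / 2)
      = 2 * ∫ x in Set.Ioi (0:ℝ), Real.exp (-x ^ 2 / 2) := by
    rw [← integral_comp_abs (f := fun x : ℝ => Real.exp (-x ^ 2 / 2))]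
    congr 1
    funext x
    rw [sq_abs]
  have heq : ∫ x : ℝ, x ^ 2 * Real.exp (-x ^ 2 / 2) = ∫ x : ℝ, Real.exp (-x ^ 2 / 2) := by
    rw [habs1, habs2, integral_sq_exp_Ioi]
  have hgauss : ∫ x : ℝ, Real.exp (-x ^ 2 / 2) = Real.sqrt (2 * π) := by
    have : ∫ u : ℝ, Real.exp (-(1/2) * u ^ 2) = Real.sqrt (2 * π) := by
      rw [integral_gaussian]
      rw [div_div_eq_mul_div, div_one, mul_comm]
    rw [← this]
    congr 1
    funext x
    ring_nf
  have hs : Real.sqrt (2 * π) ≠ 0 := ne_of_gt (Real.sqrt_pos.2 (by positivity))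
  have : ∫ u : ℝ, u ^ 2 * gphi u
      = (1 / Real.sqrt (2 * π)) * ∫ x : ℝ, x ^ 2 * Real.exp (-x ^ 2 / 2) := by
    rw [← integral_const_mul]
    congr 1
    funext u
    unfold gphi
    ring
  rw [this, heq, hgauss]
  field_simp

lemma gaussQ_eq (a : ℝ) : gaussQ a = ∫ u in Set.Ioi a, gphi u := rfl

lemma gaussQ_sub {a b : ℝ} (h : a ≤ b) :
    gaussQ a - gaussQ b = ∫ u in a..b, gphi u := by
  rw [gaussQ_eq, gaussQ_eq, intervalIntegral.integral_of_le h]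
  have hu : Set.Ioc a b ∪ Set.Ioi b = Set.Ioi a := Set.Ioc_union_Ioi_eq_Ioi h
  have hdisj : Disjoint (Set.Ioc a b) (Set.Ioi b) := Set.Ioc_disjoint_Ioi le_rfl
  have := MeasureTheory.setIntegral_union hdisj measurableSet_Ioi
    (integrable_gphi.integrableOn (s := Set.Ioc a b))
    (integrable_gphi.integrableOn (s := Set.Ioi b))
  rw [hu] at this
  rw [this]
  ring

/-- The exponent error term. -/
noncomputable def Et (t y : ℝ) : ℝ := t / 2 * |y| + t ^ 2 / 8

lemma Et_nonneg {t : ℝ} (ht : 0 < t) (y : ℝ) : 0 ≤ Et t y := by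
  unfold Et; positivity

lemma gphi_bound_on {t y u : ℝ} (ht : 0 < t) (hu : u ∈ Set.Icc (y - t/2) (y + t/2)) :
    gphi y * Real.exp (-(Et t y)) ≤ gphi u ∧ gphi u ≤ gphi y * Real.exp (Et t y) := by
  obtain ⟨hl, hr⟩ := hu
  have hkey : |u ^ 2 - y ^ 2| ≤ t * |y| + t ^ 2 / 4 := by
    rw [abs_le]
    constructor
    · rcases abs_cases y with ⟨hy, _⟩ | ⟨hy, _⟩ <;> nlinarith [sq_nonneg (u - y), sq_nonneg (u + y)]
    · rcases abs_cases y with ⟨hy, _⟩ | ⟨hy, _⟩ <;> nlinarith [sq_nonneg (u - y), sq_nonneg (u + y)]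
  rw [abs_le] at hkey
  have hc : (0:ℝ) < 1 / Real.sqrt (2 * π) := by positivity
  constructor
  · unfold gphi Et
    rw [mul_assoc, ← Real.exp_add]
    apply mul_le_mul_of_nonneg_left _ hc.le
    apply Real.exp_le_exp.2
    obtain ⟨h1, h2⟩ := hkey
    linarith
  · unfold gphi Et
    rw [mul_assoc, ← Real.exp_add]
    apply mul_le_mul_of_nonneg_left _ hc.le
    apply Real.exp_le_exp.2
    obtain ⟨h1, h2⟩ := hkey
    linarith

lemma p_eq_interval {t : ℝ} (ht : 0 < t) (y : ℝ) :
    gaussQ (y - t/2) - gaussQ (y + t/2) = ∫ u in (y - t/2)..(y + t/2), gphi u :=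
  gaussQ_sub (by linarith)

lemma p_bounds {t : ℝ} (ht : 0 < t) (y : ℝ) :
    t * (gphi y * Real.exp (-(Et t y))) ≤ gaussQ (y - t/2) - gaussQ (y + t/2)
    ∧ gaussQ (y - t/2) - gaussQ (y + t/2) ≤ t * (gphi y * Real.exp (Et t y)) := by
  rw [p_eq_interval ht]
  have hab : y - t/2 ≤ y + t/2 := by linarith
  have hgi : IntervalIntegrable gphi volume (y - t/2) (y + t/2) :=
    integrable_gphi.intervalIntegrable
  constructor
  · have := intervalIntegral.integral_mono_on hab (intervalIntegrable_const) hgi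
      (fun u hu => (gphi_bound_on ht hu).1)
    rw [intervalIntegral.integral_const] at this
    calc t * (gphi y * Real.exp (-(Et t y)))
        = (y + t/2 - (y - t/2)) • (gphi y * Real.exp (-(Et t y))) := by
          rw [smul_eq_mul]; ring_nf
      _ ≤ _ := this
  · have := intervalIntegral.integral_mono_on hab hgi (intervalIntegrable_const)
      (fun u hu => (gphi_bound_on ht hu).2)
    rw [intervalIntegral.integral_const] at this
    calc (∫ u in (y - t/2)..(y + t/2), gphi u)
        ≤ (y + t/2 - (y - t/2)) • (gphi y * Real.exp (Et t y)) := this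
      _ = t * (gphi y * Real.exp (Et t y)) := by rw [smul_eq_mul]; ring_nf

lemma p_pos {t : ℝ} (ht : 0 < t) (y : ℝ) :
    0 < gaussQ (y - t/2) - gaussQ (y + t/2) := by
  have := (p_bounds ht y).1
  have h : 0 < t * (gphi y * Real.exp (-(Et t y))) := by
    have := gphi_pos y
    positivity
  linarith

lemma log_p_bound {t : ℝ} (ht : 0 < t) (y : ℝ) :
    |Real.log (gaussQ (y - t/2) - gaussQ (y + t/2)) - (Real.log t + Real.log (gphi y))|
      ≤ Et t y := by
  obtain ⟨h1, h2⟩ := p_bounds ht y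
  have hp := p_pos ht y
  have hg := gphi_pos y
  have hup : Real.log (gaussQ (y - t/2) - gaussQ (y + t/2))
      ≤ Real.log t + Real.log (gphi y) + Et t y := by
    calc Real.log (gaussQ (y - t/2) - gaussQ (y + t/2))
        ≤ Real.log (t * (gphi y * Real.exp (Et t y))) := Real.log_le_log hp h2
      _ = Real.log t + Real.log (gphi y) + Et t y := by
          rw [Real.log_mul (ne_of_gt ht) (by positivity), Real.log_mul (ne_of_gt hg)
            (ne_of_gt (Real.exp_pos _)), Real.log_exp]
          ring
  have hlo : Real.log t + Real.log (gphi y) - Et t y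
      ≤ Real.log (gaussQ (y - t/2) - gaussQ (y + t/2)) := by
    calc Real.log t + Real.log (gphi y) - Et t y
        = Real.log (t * (gphi y * Real.exp (-(Et t y)))) := by
          rw [Real.log_mul (ne_of_gt ht) (by positivity), Real.log_mul (ne_of_gt hg)
            (ne_of_gt (Real.exp_pos _)), Real.log_exp]
          ring
      _ ≤ _ := Real.log_le_log (by positivity) h1
  rw [abs_le]
  constructor <;> linarith

lemma antitone_gaussQ : Antitone gaussQ := by
  intro a b h
  have := gaussQ_sub h
  have h2 : 0 ≤ ∫ u in a..b, gphi u := by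
    apply intervalIntegral.integral_nonneg h
    intro u _
    exact (gphi_pos u).le
  linarith

lemma measurable_p (t : ℝ) :
    Measurable (fun y : ℝ => gaussQ (y - t/2) - gaussQ (y + t/2)) := by
  have hm : Measurable gaussQ := antitone_gaussQ.measurable
  exact (hm.comp (measurable_id.sub measurable_const)).sub
    (hm.comp (measurable_id.add measurable_const))

lemma p_eq_shift {t : ℝ} (ht : 0 < t) (y : ℝ) :
    gaussQ (y - t/2) - gaussQ (y + t/2)
      = ∫ v in Set.Ioc (-(t/2)) (t/2), gphi (y + v) := by
  rw [p_eq_interval ht, ← intervalIntegral.integral_of_le (by linarith : -(t/2) ≤ t/2)]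
  have h := intervalIntegral.integral_comp_add_left gphi (a := -(t/2)) (b := t/2) y
  rw [h]
  congr 1 <;> ring

lemma integrable_pgE (t : ℝ) (ht : 0 < t) (n : ℕ) :
    Integrable (fun y : ℝ => |y| ^ n * (t * (gphi y * Real.exp (Et t y)))) := by
  refine ((integrable_pow_abs_exp_quad n (t/2)).const_mul
    (t * ((1 / Real.sqrt (2 * π)) * Real.exp (t ^ 2 / 8)))).congr ?_
  filter_upwards with y
  unfold gphi Et
  rw [show t / 2 * |y| - y ^ 2 / 2 = -y ^ 2 / 2 + (t / 2 * |y| + t ^ 2 / 8) + -(t ^ 2 / 8) by ring,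
    Real.exp_add, Real.exp_add]
  rw [Real.exp_neg]
  have h8 : Real.exp (t ^ 2 / 8) ≠ 0 := ne_of_gt (Real.exp_pos _)
  field_simp

lemma integrable_g_p {t : ℝ} (ht : 0 < t) (g : ℝ → ℝ) (hg : Measurable g)
    (hdom : Integrable (fun y : ℝ => |g y| * (t * (gphi y * Real.exp (Et t y))))) :
    Integrable (fun y : ℝ => g y * (gaussQ (y - t/2) - gaussQ (y + t/2))) := by
  refine Integrable.mono' hdom ((hg.mul (measurable_p t)).aestronglyMeasurable) ?_
  filter_upwards with y
  rw [Real.norm_eq_abs, abs_mul, abs_of_pos (p_pos ht y)]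
  exact mul_le_mul_of_nonneg_left (le_trans (p_bounds ht y).2 (le_of_eq (by ring)))
    (abs_nonneg _)

lemma fubini_p {t : ℝ} (ht : 0 < t) (g : ℝ → ℝ) (hg : Continuous g)
    (hdom : Integrable (fun y : ℝ => |g y| * (t * (gphi y * Real.exp (Et t y))))) :
    ∫ y : ℝ, g y * (gaussQ (y - t/2) - gaussQ (y + t/2))
      = ∫ v in Set.Ioc (-(t/2)) (t/2), (∫ y : ℝ, g y * gphi (y + v)) := by
  have hre : ∀ y : ℝ, g y * (gaussQ (y - t/2) - gaussQ (y + t/2))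
      = ∫ v in Set.Ioc (-(t/2)) (t/2), g y * gphi (y + v) := by
    intro y
    rw [p_eq_shift ht, ← MeasureTheory.integral_const_mul]
  simp_rw [hre]
  apply MeasureTheory.integral_integral_swap
  apply (MeasureTheory.integrable_prod_iff ?_).2
  · constructor
    · filter_upwards with y
      exact (((continuous_gphi.comp (continuous_const.add continuous_id)).integrableOn_Ioc
        ).const_mul (g y))
    · have hpe : ∀ y : ℝ, (∫ v in Set.Ioc (-(t/2)) (t/2), ‖g y * gphi (y + v)‖)
          = |g y| * (gaussQ (y - t/2) - gaussQ (y + t/2)) := by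
        intro y
        rw [p_eq_shift ht]
        rw [← MeasureTheory.integral_const_mul]
        congr 1
        funext v
        rw [Real.norm_eq_abs, abs_mul, abs_of_pos (gphi_pos _)]
      simp only [Function.uncurry_apply_pair]
      simp_rw [hpe]
      exact integrable_g_p ht (fun y => |g y|) hg.abs.measurable
        (by simp_rw [abs_abs]; exact hdom)
  · exact ((hg.comp continuous_fst).mul
      (continuous_gphi.comp (continuous_fst.add continuous_snd))).aestronglyMeasurable

lemma hdom_const {t : ℝ} (ht : 0 < t) :
    Integrable (fun y : ℝ => |(1:ℝ)| * (t * (gphi y * Real.exp (Et t y)))) := by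
  have := integrable_pgE t ht 0
  refine this.congr ?_
  filter_upwards with y
  simp

lemma integral_p {t : ℝ} (ht : 0 < t) :
    ∫ y : ℝ, (gaussQ (y - t/2) - gaussQ (y + t/2)) = t := by
  have h := fubini_p ht (fun _ => (1:ℝ)) continuous_const (hdom_const ht)
  simp only [one_mul] at h
  rw [h]
  have hinner : ∀ v : ℝ, (∫ y : ℝ, gphi (y + v)) = 1 := by
    intro v
    rw [MeasureTheory.integral_add_right_eq_self gphi v]
    exact integral_gphi
  simp_rw [hinner]
  simp only [MeasureTheory.integral_const, smul_eq_mul, mul_one]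
  rw [MeasureTheory.measureReal_restrict_apply_univ, Real.volume_real_Ioc_of_le (by linarith)]
  ring

lemma hdom_sq {t : ℝ} (ht : 0 < t) :
    Integrable (fun y : ℝ => |y ^ 2| * (t * (gphi y * Real.exp (Et t y)))) := by
  have := integrable_pgE t ht 2
  refine this.congr ?_
  filter_upwards with y
  rw [abs_of_nonneg (sq_nonneg y), sq_abs]

lemma integral_p_sq {t : ℝ} (ht : 0 < t) :
    ∫ y : ℝ, y ^ 2 * (gaussQ (y - t/2) - gaussQ (y + t/2)) = t + t ^ 3 / 12 := by
  have h := fubini_p ht (fun y => y ^ 2) (continuous_pow 2) (hdom_sq ht)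
  rw [h]
  have hinner : ∀ v : ℝ, (∫ y : ℝ, y ^ 2 * gphi (y + v)) = 1 + v ^ 2 := by
    intro v
    have hsub : (fun y : ℝ => y ^ 2 * gphi (y + v))
        = fun y : ℝ => (fun w : ℝ => (w - v) ^ 2 * gphi w) (y + v) := by
      funext y
      simp
    rw [hsub, MeasureTheory.integral_add_right_eq_self (fun w : ℝ => (w - v) ^ 2 * gphi w) v]
    have hexp : (fun w : ℝ => (w - v) ^ 2 * gphi w)
        = fun w : ℝ => w ^ 2 * gphi w - (2 * v) * (w * gphi w) + v ^ 2 * gphi w := by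
      funext w
      ring
    rw [hexp]
    have e1 : Integrable (fun w : ℝ => w ^ 2 * gphi w - 2 * v * (w * gphi w)) :=
      integrable_sq_gphi.sub (integrable_mul_gphi.const_mul (2 * v))
    have e2 : Integrable (fun w : ℝ => v ^ 2 * gphi w) := integrable_gphi.const_mul (v ^ 2)
    rw [MeasureTheory.integral_add e1 e2,
      MeasureTheory.integral_sub integrable_sq_gphi (integrable_mul_gphi.const_mul (2 * v)),
      MeasureTheory.integral_const_mul, MeasureTheory.integral_const_mul,
      integral_sq_gphi, integral_mul_gphi, integral_gphi]
    ring
  simp_rw [hinner]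
  rw [← intervalIntegral.integral_of_le (by linarith : -(t/2) ≤ t/2)]
  rw [intervalIntegral.integral_add (intervalIntegrable_const)
    (intervalIntegral.intervalIntegrable_pow 2)]
  rw [intervalIntegral.integral_const, integral_pow]
  simp only [smul_eq_mul, mul_one]
  ring

/-- The weight function for the remainder bound. -/
noncomputable def Wfun (y : ℝ) : ℝ := gphi y * Real.exp (Et 1 y) * (|y| / 2 + 1 / 8)

/-- The constant in the remainder bound. -/
noncomputable def Kc : ℝ := ∫ y : ℝ, Wfun y

lemma integrable_Wfun : Integrable Wfun := by
  have h1 := (integrable_pgE 1 one_pos 1).const_mul (1/2)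
  have h0 := (integrable_pgE 1 one_pos 0).const_mul (1/8)
  refine (h1.add h0).congr ?_
  filter_upwards with y
  unfold Wfun
  simp only [pow_one, pow_zero, one_mul, Pi.add_apply]
  ring

lemma Kc_nonneg : 0 ≤ Kc := by
  apply MeasureTheory.integral_nonneg
  intro y
  unfold Wfun
  have := gphi_pos y
  positivity

lemma Wfun_nonneg (y : ℝ) : 0 ≤ Wfun y := by
  unfold Wfun
  have := gphi_pos y
  positivity

lemma ps_bound {t : ℝ} (ht : 0 < t) (ht1 : t ≤ 1) (y : ℝ) :
    |(gaussQ (y - t/2) - gaussQ (y + t/2))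
        * (Real.log (gaussQ (y - t/2) - gaussQ (y + t/2)) - (Real.log t + Real.log (gphi y)))|
      ≤ t ^ 2 * Wfun y := by
  set p := gaussQ (y - t/2) - gaussQ (y + t/2) with hp
  have hppos : 0 < p := p_pos ht y
  have hgp := gphi_pos y
  rw [abs_mul, abs_of_pos hppos]
  calc p * |Real.log p - (Real.log t + Real.log (gphi y))|
      ≤ p * Et t y := mul_le_mul_of_nonneg_left (log_p_bound ht y) hppos.le
    _ ≤ (t * (gphi y * Real.exp (Et t y))) * Et t y := by
        apply mul_le_mul_of_nonneg_right (p_bounds ht y).2 (Et_nonneg ht y)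
    _ ≤ (t * (gphi y * Real.exp (Et 1 y))) * (t * (|y| / 2 + 1 / 8)) := by
        apply mul_le_mul
        · apply mul_le_mul_of_nonneg_left _ ht.le
          apply mul_le_mul_of_nonneg_left _ hgp.le
          apply Real.exp_le_exp.2
          unfold Et
          nlinarith [abs_nonneg y]
        · unfold Et
          nlinarith [abs_nonneg y]
        · exact Et_nonneg ht y
        · positivity
    _ = t ^ 2 * Wfun y := by unfold Wfun; ring

lemma integrable_p {t : ℝ} (ht : 0 < t) :
    Integrable (fun y : ℝ => gaussQ (y - t/2) - gaussQ (y + t/2)) := by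
  have := integrable_g_p ht (fun _ => (1:ℝ)) measurable_const (hdom_const ht)
  refine this.congr ?_
  filter_upwards with y
  rw [one_mul]

lemma integrable_sq_p {t : ℝ} (ht : 0 < t) :
    Integrable (fun y : ℝ => y ^ 2 * (gaussQ (y - t/2) - gaussQ (y + t/2))) :=
  integrable_g_p ht (fun y => y ^ 2) (measurable_id.pow_const 2) (hdom_sq ht)

lemma measurable_s (t : ℝ) :
    Measurable (fun y : ℝ => Real.log (gaussQ (y - t/2) - gaussQ (y + t/2))
      - (Real.log t + Real.log (gphi y))) := by
  exact (Real.measurable_log.comp (measurable_p t)).sub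
    (measurable_const.add (Real.measurable_log.comp continuous_gphi.measurable))

lemma integrable_ps {t : ℝ} (ht : 0 < t) (ht1 : t ≤ 1) :
    Integrable (fun y : ℝ => (gaussQ (y - t/2) - gaussQ (y + t/2))
      * (Real.log (gaussQ (y - t/2) - gaussQ (y + t/2)) - (Real.log t + Real.log (gphi y)))) := by
  refine Integrable.mono' (integrable_Wfun.const_mul (t ^ 2)) ?_ ?_
  · exact ((measurable_p t).mul (measurable_s t)).aestronglyMeasurable
  · filter_upwards with y
    rw [Real.norm_eq_abs]
    exact ps_bound ht ht1 y

lemma key_bound {t : ℝ} (ht : 0 < t) (ht1 : t ≤ 1) :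
    |eta1 t + t * (Real.log t - Real.log (Real.sqrt (2 * π)) - 1/2)|
      ≤ (Kc + 1/24) * t ^ 2 := by
  set c := Real.sqrt (2 * π) with hc
  have hcpos : 0 < c := Real.sqrt_pos.2 (by positivity)
  have hlog_gphi : ∀ y : ℝ, Real.log (gphi y) = -Real.log c - y ^ 2 / 2 := by
    intro y
    unfold gphi
    rw [Real.log_mul (by positivity) (ne_of_gt (Real.exp_pos _)), Real.log_exp,
      one_div, Real.log_inv]
    ring
  -- decompose the integrand
  have hdecomp : ∀ y : ℝ,
      (gaussQ (y - t/2) - gaussQ (y + t/2)) * Real.log (gaussQ (y - t/2) - gaussQ (y + t/2))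
      = ((Real.log t - Real.log c) * (gaussQ (y - t/2) - gaussQ (y + t/2))
          - (1/2) * (y ^ 2 * (gaussQ (y - t/2) - gaussQ (y + t/2))))
        + (gaussQ (y - t/2) - gaussQ (y + t/2))
          * (Real.log (gaussQ (y - t/2) - gaussQ (y + t/2))
              - (Real.log t + Real.log (gphi y))) := by
    intro y
    rw [hlog_gphi y]
    ring
  have hint1 : Integrable (fun y : ℝ =>
      (Real.log t - Real.log c) * (gaussQ (y - t/2) - gaussQ (y + t/2))
      - (1/2) * (y ^ 2 * (gaussQ (y - t/2) - gaussQ (y + t/2)))) :=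
    ((integrable_p ht).const_mul _).sub ((integrable_sq_p ht).const_mul _)
  have hint2 := integrable_ps ht ht1
  have hsplit : ∫ y : ℝ,
      (gaussQ (y - t/2) - gaussQ (y + t/2)) * Real.log (gaussQ (y - t/2) - gaussQ (y + t/2))
      = ((Real.log t - Real.log c) * t - (1/2) * (t + t ^ 3 / 12))
        + ∫ y : ℝ, (gaussQ (y - t/2) - gaussQ (y + t/2))
            * (Real.log (gaussQ (y - t/2) - gaussQ (y + t/2))
                - (Real.log t + Real.log (gphi y))) := by
    rw [show (fun y : ℝ => (gaussQ (y - t/2) - gaussQ (y + t/2))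
        * Real.log (gaussQ (y - t/2) - gaussQ (y + t/2))) = fun y =>
        ((Real.log t - Real.log c) * (gaussQ (y - t/2) - gaussQ (y + t/2))
          - (1/2) * (y ^ 2 * (gaussQ (y - t/2) - gaussQ (y + t/2))))
        + (gaussQ (y - t/2) - gaussQ (y + t/2))
          * (Real.log (gaussQ (y - t/2) - gaussQ (y + t/2))
              - (Real.log t + Real.log (gphi y))) from funext hdecomp]
    rw [MeasureTheory.integral_add hint1 hint2]
    congr 1
    rw [MeasureTheory.integral_sub ((integrable_p ht).const_mul _)
      ((integrable_sq_p ht).const_mul _), MeasureTheory.integral_const_mul,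
      MeasureTheory.integral_const_mul, integral_p ht, integral_p_sq ht]
  have hR : |∫ y : ℝ, (gaussQ (y - t/2) - gaussQ (y + t/2))
      * (Real.log (gaussQ (y - t/2) - gaussQ (y + t/2))
          - (Real.log t + Real.log (gphi y)))| ≤ Kc * t ^ 2 := by
    calc |∫ y : ℝ, (gaussQ (y - t/2) - gaussQ (y + t/2))
        * (Real.log (gaussQ (y - t/2) - gaussQ (y + t/2))
            - (Real.log t + Real.log (gphi y)))|
        ≤ ∫ y : ℝ, t ^ 2 * Wfun y := by
          rw [← Real.norm_eq_abs]
          refine le_trans (MeasureTheory.norm_integral_le_integral_norm _) ?_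
          apply MeasureTheory.integral_mono hint2.norm (integrable_Wfun.const_mul (t ^ 2))
          intro y
          show ‖_‖ ≤ t ^ 2 * Wfun y
          rw [Real.norm_eq_abs]
          exact ps_bound ht ht1 y
      _ = Kc * t ^ 2 := by rw [MeasureTheory.integral_const_mul]; unfold Kc; ring
  unfold eta1
  rw [hsplit]
  set R := ∫ y : ℝ, (gaussQ (y - t/2) - gaussQ (y + t/2))
      * (Real.log (gaussQ (y - t/2) - gaussQ (y + t/2))
          - (Real.log t + Real.log (gphi y))) with hRdef
  have h3 : t ^ 3 ≤ t ^ 2 := by nlinarith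
  have habs : |t ^ 3 / 24 - R| ≤ t ^ 3 / 24 + Kc * t ^ 2 := by
    rw [abs_sub_comm]
    calc |R - t ^ 3 / 24| ≤ |R| + |t ^ 3 / 24| := abs_sub _ _
      _ ≤ Kc * t ^ 2 + t ^ 3 / 24 := by
          have : |t ^ 3 / 24| = t ^ 3 / 24 := abs_of_nonneg (by positivity)
          rw [this]; linarith [hR]
      _ = t ^ 3 / 24 + Kc * t ^ 2 := by ring
  calc |-(((Real.log t - Real.log c) * t - 1/2 * (t + t ^ 3 / 12)) + R)
        + t * (Real.log t - Real.log c - 1/2)|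
      = |t ^ 3 / 24 - R| := by ring_nf
    _ ≤ t ^ 3 / 24 + Kc * t ^ 2 := habs
    _ ≤ (Kc + 1/24) * t ^ 2 := by nlinarith

lemma C_eq {t : ℝ} (ht : 0 < t) :
    (1/2) * Real.log (t ^ 2 / (2 * π * Real.exp 1))
      = Real.log t - Real.log (Real.sqrt (2 * π)) - 1/2 := by
  have h2π : (0:ℝ) < 2 * π := by positivity
  rw [Real.log_div (by positivity) (by positivity), Real.log_pow,
    Real.log_mul (ne_of_gt h2π) (ne_of_gt (Real.exp_pos 1)), Real.log_exp,
    Real.log_sqrt h2π.le]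
  push_cast
  ring

/-- Small-`t` asymptotics of `η₁`: `η₁(t) = −t·C(t) + o(t·|C(t)|)` as `t → 0⁺`,
where `C(t) = (1/2)ln(t²/(2πe))`; in particular `η₁(t) → 0`. -/
theorem stmt14 :
    (fun t => eta1 t - (-(t * ((1 / 2) * Real.log (t ^ 2 / (2 * π * Real.exp 1)))))) =o[𝓝[>] 0]
      (fun t => t * |(1 / 2) * Real.log (t ^ 2 / (2 * π * Real.exp 1))|)
    ∧ Tendsto eta1 (𝓝[>] 0) (𝓝 0) := by
  set C : ℝ → ℝ := fun t => (1/2) * Real.log (t ^ 2 / (2 * π * Real.exp 1)) with hCdef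
  have hlt1 : Set.Iio (1:ℝ) ∈ 𝓝[>] (0:ℝ) := nhdsWithin_le_nhds (Iio_mem_nhds one_pos)
  have hev : ∀ᶠ t in 𝓝[>] (0:ℝ), |eta1 t + t * C t| ≤ (Kc + 1/24) * t ^ 2 := by
    filter_upwards [self_mem_nhdsWithin, hlt1] with t ht ht1
    have ht0 : (0:ℝ) < t := ht
    have : C t = Real.log t - Real.log (Real.sqrt (2 * π)) - 1/2 := C_eq ht0
    rw [this]
    exact key_bound ht0 (le_of_lt ht1)
  have habsC : Tendsto (fun t => |C t|) (𝓝[>] (0:ℝ)) atTop := by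
    have h1 : Tendsto (fun t : ℝ => Real.log t
        + (-Real.log (Real.sqrt (2 * π)) - 1/2)) (𝓝[>] (0:ℝ)) atBot :=
      tendsto_atBot_add_const_right _ _ Real.tendsto_log_nhdsGT_zero
    have h2 : Tendsto C (𝓝[>] (0:ℝ)) atBot := by
      refine h1.congr' ?_
      filter_upwards [self_mem_nhdsWithin] with t ht
      have hct : C t = (1/2) * Real.log (t ^ 2 / (2 * π * Real.exp 1)) := rfl
      rw [hct, C_eq (ht : (0:ℝ) < t)]
      ring
    exact tendsto_abs_atBot_atTop.comp h2
  have hKpos : (0:ℝ) ≤ Kc + 1/24 := by linarith [Kc_nonneg]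
  constructor
  · rw [isLittleO_iff]
    intro ε hε
    have hevC : ∀ᶠ t in 𝓝[>] (0:ℝ), (Kc + 1/24) / ε ≤ |C t| :=
      habsC.eventually (eventually_ge_atTop _)
    filter_upwards [hev, hevC, self_mem_nhdsWithin, hlt1] with t hb hc ht h1
    have ht0 : (0:ℝ) < t := ht
    rw [Real.norm_eq_abs, Real.norm_eq_abs]
    have he : eta1 t - (-(t * C t)) = eta1 t + t * C t := by ring
    rw [he, abs_of_nonneg (by positivity : (0:ℝ) ≤ t * |C t|)]
    rw [div_le_iff₀ hε] at hc
    calc |eta1 t + t * C t| ≤ (Kc + 1/24) * t ^ 2 := hb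
      _ = ((Kc + 1/24) * t) * t := by ring
      _ ≤ (|C t| * ε) * t := by
          apply mul_le_mul_of_nonneg_right _ ht0.le
          have ht1 : t < 1 := h1
          nlinarith [hKpos]
      _ = ε * (t * |C t|) := by ring
  · have h1 : Tendsto (fun t => eta1 t + t * C t) (𝓝[>] (0:ℝ)) (𝓝 0) := by
      apply squeeze_zero_norm' (a := fun t => (Kc + 1/24) * t ^ 2)
      · filter_upwards [hev] with t hb
        rw [Real.norm_eq_abs]
        exact hb
      · have : Continuous (fun t : ℝ => (Kc + 1/24) * t ^ 2) := by fun_prop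
        have h := (this.tendsto 0).mono_left (nhdsWithin_le_nhds (s := Set.Ioi (0:ℝ)))
        simpa using h
    have h2 : Tendsto (fun t => t * C t) (𝓝[>] (0:ℝ)) (𝓝 0) := by
      have ha : Tendsto (fun t : ℝ => t * Real.log t
          - (Real.log (Real.sqrt (2 * π)) + 1/2) * t) (𝓝[>] (0:ℝ)) (𝓝 0) := by
        have hb1 : Tendsto (fun t : ℝ => t * Real.log t) (𝓝[>] (0:ℝ)) (𝓝 0) := by
          have h := (Real.continuous_mul_log.tendsto 0).mono_left
            (nhdsWithin_le_nhds (s := Set.Ioi (0:ℝ)))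
          simpa using h
        have hb2 : Tendsto (fun t : ℝ => (Real.log (Real.sqrt (2 * π)) + 1/2) * t)
            (𝓝[>] (0:ℝ)) (𝓝 0) := by
          have : Continuous (fun t : ℝ => (Real.log (Real.sqrt (2 * π)) + 1/2) * t) := by
            fun_prop
          have h := (this.tendsto 0).mono_left (nhdsWithin_le_nhds (s := Set.Ioi (0:ℝ)))
          simpa using h
        simpa using hb1.sub hb2
      refine ha.congr' ?_
      filter_upwards [self_mem_nhdsWithin] with t ht
      have hct : C t = (1/2) * Real.log (t ^ 2 / (2 * π * Real.exp 1)) := rfl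
      rw [hct, C_eq (ht : (0:ℝ) < t)]
      ring
    have := h1.sub h2
    simp only [add_sub_cancel_right] at this
    simpa using this
end

section
/- Let H be a positive random variable with density f satisfying f(h) = c·h^{α−1}(1 + o(1)) as h → 0⁺ for some α > 0, c > 0, and f(h) ≤ C/h^{1+β'} for h ≥ h₁ for some β' > 0, C > 0, h₁ > 0. Let g: (0,∞) → [0,M] be a bounded measurable function with g(t) ≤ K·t·(1 + |ln t|) for t ∈ (0,1]. Then E[(σ/(aH))·g(aH/σ)] = O((σ/a)^{min(α,1)}·ln(a/σ)) as a/σ → ∞. -/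
open MeasureTheory Real Filter Topology

/-- `1 + |log t| ≤ (1 + 1/s) * t ^ (-s)` for `t ∈ (0,1]` and `s > 0`. -/
lemma log_bound_aux {t s : ℝ} (ht0 : 0 < t) (ht1 : t ≤ 1) (hs : 0 < s) :
    1 + |Real.log t| ≤ (1 + 1/s) * t ^ (-s) := by
  have hinv : 1 ≤ t⁻¹ := one_le_inv_iff₀.2 ⟨ht0, ht1⟩
  have habs : |Real.log t| = Real.log t⁻¹ := by
    rw [Real.log_inv, abs_of_nonpos (Real.log_nonpos ht0.le ht1)]
  have hts : t ^ (-s) = t⁻¹ ^ s := by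
    rw [Real.inv_rpow ht0.le, Real.rpow_neg ht0.le]
  have h1 : 1 ≤ t⁻¹ ^ s := Real.one_le_rpow hinv hs.le
  have h2 : Real.log (t⁻¹ ^ s) ≤ t⁻¹ ^ s - 1 :=
    Real.log_le_sub_one_of_pos (lt_of_lt_of_le one_pos h1)
  rw [Real.log_rpow (lt_of_lt_of_le one_pos hinv)] at h2
  have h3 : Real.log t⁻¹ ≤ (t⁻¹ ^ s - 1) / s := by
    rw [le_div_iff₀ hs, mul_comm]; exact h2
  rw [habs, hts]
  have h5 : (t⁻¹ ^ s - 1) / s ≤ t⁻¹ ^ s / s := by gcongr; linarith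
  have h6 : (1 + 1/s) * t⁻¹ ^ s = t⁻¹ ^ s + t⁻¹ ^ s / s := by ring
  rw [h6]
  have h7 : Real.log t⁻¹ + 1 ≤ (t⁻¹ ^ s - 1) / s + t⁻¹ ^ s := by linarith
  calc 1 + Real.log t⁻¹ = Real.log t⁻¹ + 1 := by ring
    _ ≤ (t⁻¹ ^ s - 1) / s + t⁻¹ ^ s := h7
    _ ≤ t⁻¹ ^ s / s + t⁻¹ ^ s := by linarith
    _ = t⁻¹ ^ s + t⁻¹ ^ s / s := by ring

/-- Abstract error-moment estimate: for a positive fading variable `H` with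
density `f(h) = c·h^{α−1}(1+o(1))` near `0` and `f(h) ≤ Cf/h^{1+β'}` in the tail,
and a bounded `g` with `g(t) ≤ K·t(1+|ln t|)` near `0`,
`E[(σ/(aH))·g(aH/σ)] = O((σ/a)^{min(α,1)}·ln(a/σ))` as `a/σ → ∞`. -/
theorem stmt18 (ν : Measure ℝ) [IsProbabilityMeasure ν] (f g : ℝ → ℝ)
    (c α Cf β' h₁ M K : ℝ)
    (hc : 0 < c) (hα : 0 < α) (hCf : 0 < Cf) (hβ' : 0 < β') (hh₁ : 0 < h₁)
    (hM : 0 ≤ M) (hK : 0 < K)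
    (hν : ν = volume.withDensity (fun h => ENNReal.ofReal (f h)))
    (hν0 : ν (Set.Iic 0) = 0)
    (hf0 : Tendsto (fun h => f h / (c * h ^ (α - 1))) (𝓝[>] 0) (𝓝 1))
    (hftail : ∀ h ≥ h₁, f h ≤ Cf / h ^ (1 + β'))
    (hgmeas : Measurable g) (hgbdd : ∀ t > (0 : ℝ), g t ∈ Set.Icc 0 M)
    (hgsmall : ∀ t ∈ Set.Ioc (0 : ℝ) 1, g t ≤ K * t * (1 + |Real.log t|)) :
    ∃ C t₀ : ℝ, 0 < C ∧ 0 < t₀ ∧ ∀ a σ : ℝ, 0 < σ → t₀ ≤ a / σ →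
      |∫ h, (σ / (a * h)) * g (a * h / σ) ∂ν|
        ≤ C * (σ / a) ^ (min α 1) * Real.log (a / σ) := by
  classical
  -- near-zero bound on the density
  have h2 : ∀ᶠ h in 𝓝[>] (0:ℝ), f h / (c * h ^ (α - 1)) < 2 :=
    hf0.eventually (gt_mem_nhds (by norm_num))
  rw [eventually_iff, mem_nhdsGT_iff_exists_Ioc_subset] at h2
  obtain ⟨u, hu, husub⟩ := h2
  set δ : ℝ := min u 1 with hδdef
  have hδpos : 0 < δ := lt_min hu one_pos
  have hδ1 : δ ≤ 1 := min_le_right _ _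
  have hfle : ∀ h ∈ Set.Ioc (0:ℝ) δ, f h ≤ 2 * c * h ^ (α - 1) := by
    intro h hh
    have hp : (0:ℝ) < c * h ^ (α - 1) := mul_pos hc (Real.rpow_pos_of_pos hh.1 _)
    have h3 : f h / (c * h ^ (α - 1)) < 2 := husub ⟨hh.1, hh.2.trans (min_le_left _ _)⟩
    have h4 := (div_lt_iff₀ hp).1 h3
    linarith
  set m : ℝ := min α 1 with hm
  have hm0 : 0 < m := lt_min hα one_pos
  have hmα : m ≤ α := min_le_left _ _
  have hm1 : m ≤ 1 := min_le_right _ _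
  set A₀ : ℝ := 2*c*K*(1+2/α)*(2/α) with hA₀def
  have hA₀ : 0 < A₀ := by positivity
  have hCpos : 0 < A₀ + 2*c*M + M/δ := by positivity
  refine ⟨A₀ + 2*c*M + M/δ, max (Real.exp 1) (1/δ), hCpos,
    lt_of_lt_of_le (Real.exp_pos 1) (le_max_left _ _), ?_⟩
  intro a σ hσ hrt
  set r : ℝ := a / σ with hrdef
  have hre : Real.exp 1 ≤ r := le_trans (le_max_left _ _) hrt
  have hr1 : 1 ≤ r := le_trans (Real.one_le_exp (by norm_num)) hre
  have hr0 : 0 < r := lt_of_lt_of_le one_pos hr1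
  have ha : 0 < a := by
    rcases lt_trichotomy a 0 with h | h | h
    · exfalso; have : r < 0 := div_neg_of_neg_of_pos h hσ; linarith
    · exfalso; rw [hrdef] at hr0; rw [h] at hr0; simp at hr0
    · exact h
  set ε : ℝ := σ / a with hεdef
  have hεr : ε = r⁻¹ := by rw [hεdef, hrdef, inv_div]
  have hε0 : 0 < ε := div_pos hσ ha
  have hε1 : ε ≤ 1 := by rw [hεr]; exact inv_le_one_of_one_le₀ hr1
  have hεδ : ε ≤ δ := by
    have h1δ : 1/δ ≤ r := le_trans (le_max_right _ _) hrt
    rw [hεr]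
    calc r⁻¹ ≤ (1/δ)⁻¹ := inv_anti₀ (by positivity) h1δ
      _ = δ := by rw [one_div, inv_inv]
  have hlog1 : 1 ≤ Real.log r := by
    have := Real.log_le_log (Real.exp_pos 1) hre
    rwa [Real.log_exp] at this
  have hεmr : ∀ x : ℝ, ε ^ x = r ^ (-x) := fun x => by
    rw [hεr, Real.inv_rpow hr0.le, Real.rpow_neg hr0.le]
  -- the integrand
  set φ : ℝ → ℝ := fun h => (σ / (a * h)) * g (a * h / σ) with hφdef
  -- basic facts about φ on (0, ∞)
  have ht_eq : ∀ h : ℝ, a * h / σ = r * h := fun h => by rw [hrdef]; ring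
  have hφ_eq : ∀ h : ℝ, 0 < h → φ h = (r * h)⁻¹ * g (r * h) := by
    intro h hh
    rw [hφdef]
    simp only
    rw [ht_eq h]
    congr 1
    rw [← ht_eq h, inv_div]
  have hφnn : ∀ h : ℝ, 0 < h → 0 ≤ φ h := by
    intro h hh
    rw [hφ_eq h hh]
    have hrh : 0 < r * h := by positivity
    exact mul_nonneg (inv_nonneg.2 hrh.le) (hgbdd _ hrh).1
  -- the comparison measure near 0
  set G : ℝ → ENNReal := fun h => ENNReal.ofReal (2*c*h^(α-1)) with hGdef
  have hGmeas : Measurable G := by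
    rw [hGdef]; fun_prop
  set μ₂ : Measure ℝ := volume.withDensity G with hμ₂def
  have hcomp : ∀ s : Set ℝ, MeasurableSet s → s ⊆ Set.Ioc 0 δ →
      ν.restrict s ≤ μ₂.restrict s := by
    intro s hs hsub
    refine Measure.le_iff.2 (fun t ht => ?_)
    rw [Measure.restrict_apply ht, Measure.restrict_apply ht, hν, hμ₂def,
      withDensity_apply _ (ht.inter hs), withDensity_apply _ (ht.inter hs)]
    refine lintegral_mono_ae ?_
    filter_upwards [ae_restrict_mem (ht.inter hs)] with h hh
    exact ENNReal.ofReal_le_ofReal (hfle h (hsub hh.2))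
  have measA : MeasurableSet (Set.Ioc (0:ℝ) ε) := measurableSet_Ioc
  have measB : MeasurableSet (Set.Ioc ε δ) := measurableSet_Ioc
  have measC : MeasurableSet (Set.Ioi δ) := measurableSet_Ioi
  -- pointwise bounds
  have hptA : ∀ h ∈ Set.Ioc (0:ℝ) ε, φ h ≤ (K*(1+2/α)*ε^(α/2)) * h^(-(α/2)) := by
    intro h hh
    have hh0 := hh.1
    have ht0 : 0 < r*h := by positivity
    have ht1 : r*h ≤ 1 := by
      calc r*h ≤ r*ε := mul_le_mul_of_nonneg_left hh.2 hr0.le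
        _ = 1 := by rw [hεr]; field_simp
    rw [hφ_eq h hh0]
    have hg := hgsmall (r*h) ⟨ht0, ht1⟩
    have step1 : (r*h)⁻¹ * g (r*h) ≤ K * (1 + |Real.log (r*h)|) := by
      have h5 := mul_le_mul_of_nonneg_left hg (inv_nonneg.2 ht0.le)
      calc (r*h)⁻¹ * g (r*h) ≤ (r*h)⁻¹ * (K * (r*h) * (1 + |Real.log (r*h)|)) := h5
        _ = K * (1 + |Real.log (r*h)|) := by field_simp
    have h1s : 1/(α/2) = 2/α := by
      rw [div_div_eq_mul_div, one_mul]
    have hlb := log_bound_aux ht0 ht1 (half_pos hα)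
    rw [h1s] at hlb
    have step2 : K * (1 + |Real.log (r*h)|) ≤ K * ((1 + 2/α) * (r*h)^(-(α/2))) :=
      mul_le_mul_of_nonneg_left hlb hK.le
    have step3 : (r*h)^(-(α/2)) = ε^(α/2) * h^(-(α/2)) := by
      rw [Real.mul_rpow hr0.le hh0.le, hεmr]
    calc (r*h)⁻¹ * g (r*h) ≤ K * ((1 + 2/α) * (r*h)^(-(α/2))) := step1.trans step2
      _ = K * ((1 + 2/α) * (ε^(α/2) * h^(-(α/2)))) := by rw [step3]
      _ = (K*(1+2/α)*ε^(α/2)) * h^(-(α/2)) := by ring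
  have hptB : ∀ h ∈ Set.Ioc ε δ, φ h ≤ (M*ε) * h⁻¹ := by
    intro h hh
    have hh0 : 0 < h := lt_trans hε0 hh.1
    have ht0 : 0 < r*h := by positivity
    rw [hφ_eq h hh0]
    calc (r*h)⁻¹ * g (r*h) ≤ (r*h)⁻¹ * M :=
          mul_le_mul_of_nonneg_left (hgbdd _ ht0).2 (inv_nonneg.2 ht0.le)
      _ = (M*ε) * h⁻¹ := by rw [mul_inv, hεr]; ring
  have hptC : ∀ h ∈ Set.Ioi δ, φ h ≤ M*ε/δ := by
    intro h hh
    have hh0 : 0 < h := lt_trans hδpos hh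
    have ht0 : 0 < r*h := by positivity
    rw [hφ_eq h hh0]
    have hinv : (r*h)⁻¹ ≤ (r*δ)⁻¹ := by
      apply inv_anti₀ (by positivity)
      exact mul_le_mul_of_nonneg_left (le_of_lt hh) hr0.le
    calc (r*h)⁻¹ * g (r*h) ≤ (r*h)⁻¹ * M :=
          mul_le_mul_of_nonneg_left (hgbdd _ ht0).2 (inv_nonneg.2 ht0.le)
      _ ≤ (r*δ)⁻¹ * M := mul_le_mul_of_nonneg_right hinv hM
      _ = M*ε/δ := by rw [mul_inv, hεr]; ring
  -- Region A estimate
  have estA : ∫⁻ h in Set.Ioc (0:ℝ) ε, ENNReal.ofReal ‖φ h‖ ∂ν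
      ≤ ENNReal.ofReal (A₀ * ε^m * Real.log r) := by
    set cA : ℝ := K*(1+2/α)*ε^(α/2) with hcAdef
    have hcA : 0 ≤ cA := by positivity
    have ψmeas : Measurable (fun h : ℝ => ENNReal.ofReal (cA * h^(-(α/2)))) := by
      fun_prop
    calc ∫⁻ h in Set.Ioc (0:ℝ) ε, ENNReal.ofReal ‖φ h‖ ∂ν
        ≤ ∫⁻ h in Set.Ioc (0:ℝ) ε, ENNReal.ofReal (cA * h^(-(α/2))) ∂ν := by
          refine lintegral_mono_ae ?_
          filter_upwards [ae_restrict_mem measA] with h hh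
          rw [Real.norm_eq_abs, abs_of_nonneg (hφnn h hh.1)]
          exact ENNReal.ofReal_le_ofReal (hptA h hh)
      _ ≤ ∫⁻ h in Set.Ioc (0:ℝ) ε, ENNReal.ofReal (cA * h^(-(α/2))) ∂μ₂ :=
          lintegral_mono' (hcomp _ measA (Set.Ioc_subset_Ioc_right hεδ)) le_rfl
      _ = ∫⁻ h in Set.Ioc (0:ℝ) ε, G h * ENNReal.ofReal (cA * h^(-(α/2))) ∂volume := by
          rw [hμ₂def, setLIntegral_withDensity_eq_setLIntegral_mul volume hGmeas ψmeas measA]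
          rfl
      _ ≤ ∫⁻ h in Set.Ioc (0:ℝ) ε, ENNReal.ofReal ((2*c*cA) * h^(α/2 - 1)) ∂volume := by
          refine lintegral_mono_ae ?_
          filter_upwards [ae_restrict_mem measA] with h hh
          have hh0 : 0 < h := hh.1
          rw [hGdef]
          simp only
          have hnn : (0:ℝ) ≤ 2*c*h^(α-1) :=
            mul_nonneg (by positivity) (Real.rpow_nonneg hh0.le _)
          rw [← ENNReal.ofReal_mul hnn]
          apply ENNReal.ofReal_le_ofReal
          have hexp : h^(α-1) * h^(-(α/2)) = h^(α/2-1) := by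
            rw [← Real.rpow_add hh.1]
            congr 1
            ring
          calc 2*c*h^(α-1) * (cA * h^(-(α/2))) = 2*c*cA * (h^(α-1)*h^(-(α/2))) := by ring
            _ = 2*c*cA * h^(α/2-1) := by rw [hexp]
            _ ≤ 2*c*cA * h^(α/2-1) := le_rfl
      _ = ENNReal.ofReal ((2*c*cA) * (ε^(α/2) / (α/2))) := by
          have hint : IntegrableOn (fun h : ℝ => (2*c*cA) * h^(α/2-1)) (Set.Ioc 0 ε) volume :=
            ((intervalIntegral.intervalIntegrable_rpow' (by linarith : (-1:ℝ) < α/2-1)).1).const_mul _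
          rw [← ofReal_integral_eq_lintegral_ofReal hint ?_]
          · congr 1
            rw [← intervalIntegral.integral_of_le hε0.le,
              intervalIntegral.integral_const_mul, integral_rpow (Or.inl (by linarith))]
            have he2 : α/2-1+1 = α/2 := by ring
            rw [he2, Real.zero_rpow (ne_of_gt (half_pos hα))]
            ring
          · filter_upwards [ae_restrict_mem measA] with h hh
            exact mul_nonneg (by positivity) (Real.rpow_nonneg hh.1.le _)
      _ ≤ ENNReal.ofReal (A₀ * ε^m * Real.log r) := by
          apply ENNReal.ofReal_le_ofReal
          have e1 : 2*c*cA*(ε^(α/2) / (α/2)) = A₀ * (ε^(α/2)*ε^(α/2)) := by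
            rw [hcAdef, hA₀def]
            field_simp
          have e2 : ε^(α/2)*ε^(α/2) = ε^α := by
            rw [← Real.rpow_add hε0]
            congr 1
            ring
          have e3 : ε^α ≤ ε^m := Real.rpow_le_rpow_of_exponent_ge hε0 hε1 hmα
          rw [e1, e2]
          calc A₀ * ε^α ≤ A₀ * ε^m := mul_le_mul_of_nonneg_left e3 hA₀.le
            _ ≤ A₀ * ε^m * Real.log r :=
              le_mul_of_one_le_right (by positivity) hlog1
  -- Region B estimate
  have estB : ∫⁻ h in Set.Ioc ε δ, ENNReal.ofReal ‖φ h‖ ∂ν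
      ≤ ENNReal.ofReal ((2*c*M) * ε^m * Real.log r) := by
    have ψmeas : Measurable (fun h : ℝ => ENNReal.ofReal ((M*ε) * h⁻¹)) := by
      fun_prop
    calc ∫⁻ h in Set.Ioc ε δ, ENNReal.ofReal ‖φ h‖ ∂ν
        ≤ ∫⁻ h in Set.Ioc ε δ, ENNReal.ofReal ((M*ε) * h⁻¹) ∂ν := by
          refine lintegral_mono_ae ?_
          filter_upwards [ae_restrict_mem measB] with h hh
          rw [Real.norm_eq_abs, abs_of_nonneg (hφnn h (lt_trans hε0 hh.1))]
          exact ENNReal.ofReal_le_ofReal (hptB h hh)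
      _ ≤ ∫⁻ h in Set.Ioc ε δ, ENNReal.ofReal ((M*ε) * h⁻¹) ∂μ₂ :=
          lintegral_mono' (hcomp _ measB (Set.Ioc_subset_Ioc_left hε0.le)) le_rfl
      _ = ∫⁻ h in Set.Ioc ε δ, G h * ENNReal.ofReal ((M*ε) * h⁻¹) ∂volume := by
          rw [hμ₂def, setLIntegral_withDensity_eq_setLIntegral_mul volume hGmeas ψmeas measB]
          rfl
      _ ≤ ∫⁻ h in Set.Ioc ε δ, ENNReal.ofReal ((2*c*M*ε^m) * h⁻¹) ∂volume := by
          refine lintegral_mono_ae ?_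
          filter_upwards [ae_restrict_mem measB] with h hh
          have hh0 : 0 < h := lt_trans hε0 hh.1
          rw [hGdef]
          simp only
          have hnn : (0:ℝ) ≤ 2*c*h^(α-1) :=
            mul_nonneg (by positivity) (Real.rpow_nonneg hh0.le _)
          rw [← ENNReal.ofReal_mul hnn]
          apply ENNReal.ofReal_le_ofReal
          have hb1 : h^(α-1) ≤ h^(m-1) :=
            Real.rpow_le_rpow_of_exponent_ge hh0 (hh.2.trans hδ1) (by linarith)
          have hb2 : h^(m-1) ≤ ε^(m-1) :=
            Real.rpow_le_rpow_of_nonpos hε0 hh.1.le (by linarith)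
          have hb3 : ε^(m-1) * ε = ε^m := by
            rw [← Real.rpow_add_one (ne_of_gt hε0) (m-1)]
            norm_num
          have hinv : (0:ℝ) ≤ h⁻¹ := inv_nonneg.2 hh0.le
          calc 2*c*h^(α-1) * ((M*ε) * h⁻¹) = (2*c*M*ε) * h^(α-1) * h⁻¹ := by ring
            _ ≤ (2*c*M*ε) * ε^(m-1) * h⁻¹ := by
                apply mul_le_mul_of_nonneg_right _ hinv
                exact mul_le_mul_of_nonneg_left (hb1.trans hb2) (by positivity)
            _ = (2*c*M*ε^m) * h⁻¹ := by rw [← hb3]; ring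
      _ = ENNReal.ofReal ((2*c*M*ε^m) * Real.log (δ/ε)) := by
          have hcont : ContinuousOn (fun h : ℝ => (2*c*M*ε^m) * h⁻¹) (Set.Icc ε δ) := by
            apply ContinuousOn.mul continuousOn_const
            exact ContinuousOn.inv₀ continuousOn_id
              (fun x hx => ne_of_gt (lt_of_lt_of_le hε0 hx.1))
          have hint : IntegrableOn (fun h : ℝ => (2*c*M*ε^m) * h⁻¹) (Set.Ioc ε δ) volume :=
            (hcont.integrableOn_Icc).mono_set Set.Ioc_subset_Icc_self
          rw [← ofReal_integral_eq_lintegral_ofReal hint ?_]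
          · congr 1
            rw [← intervalIntegral.integral_of_le hεδ,
              intervalIntegral.integral_const_mul, integral_inv ?_]
            rw [Set.uIcc_of_le hεδ]
            intro hmem
            exact absurd hmem.1 (not_le.2 hε0)
          · filter_upwards [ae_restrict_mem measB] with h hh
            have hh0 : 0 < h := lt_trans hε0 hh.1
            positivity
      _ ≤ ENNReal.ofReal ((2*c*M) * ε^m * Real.log r) := by
          apply ENNReal.ofReal_le_ofReal
          have hlle : Real.log (δ/ε) ≤ Real.log r := by
            apply Real.log_le_log (by positivity)
            calc δ/ε ≤ 1/ε := (div_le_div_iff_of_pos_right hε0).2 hδ1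
              _ = r := by rw [one_div, hεr, inv_inv]
          calc (2*c*M*ε^m) * Real.log (δ/ε) ≤ (2*c*M*ε^m) * Real.log r :=
                mul_le_mul_of_nonneg_left hlle (by positivity)
            _ = (2*c*M) * ε^m * Real.log r := by ring
  -- Region C estimate
  have estC : ∫⁻ h in Set.Ioi δ, ENNReal.ofReal ‖φ h‖ ∂ν
      ≤ ENNReal.ofReal ((M/δ) * ε^m * Real.log r) := by
    calc ∫⁻ h in Set.Ioi δ, ENNReal.ofReal ‖φ h‖ ∂ν
        ≤ ∫⁻ _ in Set.Ioi δ, ENNReal.ofReal (M*ε/δ) ∂ν := by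
          refine lintegral_mono_ae ?_
          filter_upwards [ae_restrict_mem measC] with h hh
          rw [Real.norm_eq_abs, abs_of_nonneg (hφnn h (lt_trans hδpos hh))]
          exact ENNReal.ofReal_le_ofReal (hptC h hh)
      _ = ENNReal.ofReal (M*ε/δ) * ν (Set.Ioi δ) := setLIntegral_const _ _
      _ ≤ ENNReal.ofReal (M*ε/δ) * 1 := mul_le_mul_right prob_le_one _
      _ = ENNReal.ofReal (M*ε/δ) := mul_one _
      _ ≤ ENNReal.ofReal ((M/δ) * ε^m * Real.log r) := by
          apply ENNReal.ofReal_le_ofReal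
          have he : ε ≤ ε^m := by
            calc ε = ε^(1:ℝ) := (Real.rpow_one ε).symm
              _ ≤ ε^m := Real.rpow_le_rpow_of_exponent_ge hε0 hε1 hm1
          calc M*ε/δ = (M/δ) * ε := by ring
            _ ≤ (M/δ) * ε^m := mul_le_mul_of_nonneg_left he (by positivity)
            _ ≤ (M/δ) * ε^m * Real.log r :=
                le_mul_of_one_le_right (by positivity) hlog1
  -- combine
  have hdisj2 : Disjoint (Set.Ioc ε δ) (Set.Ioi δ) := by
    rw [Set.disjoint_left]
    intro x hx hx'
    exact absurd hx.2 (not_le.2 hx')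
  have hdisj1 : Disjoint (Set.Ioc (0:ℝ) ε) (Set.Ioc ε δ ∪ Set.Ioi δ) := by
    rw [Set.disjoint_left]
    intro x hx hx'
    rcases hx' with h' | h'
    · exact absurd hx.2 (not_le.2 h'.1)
    · exact absurd hx.2 (not_le.2 (lt_of_le_of_lt hεδ h'))
  have htotal : ∫⁻ h, ENNReal.ofReal ‖φ h‖ ∂ν
      ≤ ENNReal.ofReal ((A₀ + 2*c*M + M/δ) * ε^m * Real.log r) := by
    have hsplit0 : ∫⁻ h, ENNReal.ofReal ‖φ h‖ ∂ν
        = ∫⁻ h in Set.Ioi (0:ℝ), ENNReal.ofReal ‖φ h‖ ∂ν := by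
      have h7 := lintegral_add_compl (fun h => ENNReal.ofReal ‖φ h‖)
        (measurableSet_Ioi (a := (0:ℝ))) (μ := ν)
      rw [Set.compl_Ioi] at h7
      rw [setLIntegral_measure_zero _ _ hν0, add_zero] at h7
      exact h7.symm
    have hset : Set.Ioi (0:ℝ) = Set.Ioc 0 ε ∪ (Set.Ioc ε δ ∪ Set.Ioi δ) := by
      rw [Set.Ioc_union_Ioi_eq_Ioi hεδ, Set.Ioc_union_Ioi_eq_Ioi hε0.le]
    rw [hsplit0, hset, lintegral_union (measB.union measC) hdisj1,
      lintegral_union measC hdisj2]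
    have hsum := add_le_add estA (add_le_add estB estC)
    apply le_trans hsum
    rw [← ENNReal.ofReal_add (by positivity) ?_, ← ENNReal.ofReal_add ?_ ?_]
    · apply ENNReal.ofReal_le_ofReal
      apply le_of_eq
      ring
    · positivity
    · positivity
    · positivity
  calc |∫ h, φ h ∂ν| = ‖∫ h, φ h ∂ν‖ := (Real.norm_eq_abs _).symm
    _ ≤ (∫⁻ h, ENNReal.ofReal ‖φ h‖ ∂ν).toReal := norm_integral_le_lintegral_norm _
    _ ≤ (A₀ + 2*c*M + M/δ) * ε^m * Real.log r := by
        apply ENNReal.toReal_le_of_le_ofReal ?_ htotal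
        have h8 : (0:ℝ) ≤ ε^m := Real.rpow_nonneg hε0.le m
        exact mul_nonneg (mul_nonneg hCpos.le h8) (le_trans zero_le_one hlog1)
end
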